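/- Let γ ∈ ℂ satisfy Im(γ) < 0 and Im(γ²) ≥ 0. Let F : ℝ → ℂ be four times continuously differentiable and suppose there exist constants C > 0 and c > 0 with |F(z)| + |F'(z)| + |F''(z)| + |F'''(z)| ≤ C·e^{−c·z²} for all z ∈ ℝ. If F''''(z) + γ·(γ − z²)·F''(z) + 2γ·F(z) = 0 for every z ∈ ℝ, then F is identically zero. -/

import Mathlib

open MeasureTheory Complex Filter Topology

lemma gauss_int {E : Type*} [NormedAddCommGroup E] {u : ℝ → E} (hu : Continuous u)
    {D b : ℝ} (hb : 0 < b) (h : ∀ z, ‖u z‖ ≤ D * Real.exp (-b * z ^ 2)) :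
    Integrable u :=
  ((integrable_exp_neg_mul_sq hb).const_mul D).mono' hu.aestronglyMeasurable (ae_of_all _ h)

lemma sq_mul_exp_le {c : ℝ} (hc : 0 < c) (z : ℝ) :
    z ^ 2 * Real.exp (-c * z ^ 2) ≤ 1 / c := by
  have h1 := Real.add_one_le_exp (c * z ^ 2)
  have h2 : Real.exp (-c * z ^ 2) = (Real.exp (c * z ^ 2))⁻¹ := by
    rw [← Real.exp_neg]; ring_nf
  have h3 := Real.exp_pos (c * z ^ 2)
  rw [h2, le_div_iff₀ hc]
  have h4 : c * z ^ 2 ≤ Real.exp (c * z ^ 2) := by linarith [sq_nonneg z]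
  calc z ^ 2 * (Real.exp (c * z ^ 2))⁻¹ * c
      = (c * z ^ 2) * (Real.exp (c * z ^ 2))⁻¹ := by ring
    _ ≤ Real.exp (c * z ^ 2) * (Real.exp (c * z ^ 2))⁻¹ :=
        mul_le_mul_of_nonneg_right h4 (by positivity)
    _ = 1 := mul_inv_cancel₀ h3.ne'

/-- The vanishing lemma of Section 3.1 of the paper: if `Im γ < 0`,
`Im (γ²) ≥ 0`, and `F : ℝ → ℂ` is `C⁴` with Gaussian decay of `F, F', F'', F'''`
and solves `F'''' + γ (γ - z²) F'' + 2γ F = 0`, then `F ≡ 0`. -/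
theorem stmt4 (γ : ℂ) (hγ : γ.im < 0) (hγ2 : 0 ≤ (γ ^ 2).im)
    (F : ℝ → ℂ) (hF : ContDiff ℝ 4 F)
    (C c : ℝ) (hC : 0 < C) (hc : 0 < c)
    (hbound : ∀ z : ℝ,
      ‖F z‖ + ‖deriv F z‖ + ‖iteratedDeriv 2 F z‖ + ‖iteratedDeriv 3 F z‖
        ≤ C * Real.exp (-c * z ^ 2))
    (heq : ∀ z : ℝ,
      iteratedDeriv 4 F z + γ * (γ - (z : ℂ) ^ 2) * iteratedDeriv 2 F z
        + 2 * γ * F z = 0) :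
    ∀ z : ℝ, F z = 0 := by
  set F1 := deriv F with hF1def
  set F2 := iteratedDeriv 2 F with hF2def
  set F3 := iteratedDeriv 3 F with hF3def
  set F4 := iteratedDeriv 4 F with hF4def
  have hdF : Differentiable ℝ F := hF.differentiable (by norm_num)
  have hdF1 : Differentiable ℝ F1 := by
    rw [hF1def, ← iteratedDeriv_one]
    exact hF.differentiable_iteratedDeriv 1 (by norm_num)
  have hdF2 : Differentiable ℝ F2 := hF.differentiable_iteratedDeriv 2 (by norm_num)
  have hdF3 : Differentiable ℝ F3 := hF.differentiable_iteratedDeriv 3 (by norm_num)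
  have hcF4 : Continuous F4 := hF.continuous_iteratedDeriv 4 (by norm_num)
  have e2 : F2 = deriv F1 := by
    rw [hF2def, hF1def, show (2 : ℕ) = 1 + 1 from rfl, iteratedDeriv_succ, iteratedDeriv_one]
  have e3 : F3 = deriv F2 := by
    rw [hF3def, hF2def, show (3 : ℕ) = 2 + 1 from rfl, iteratedDeriv_succ]
  have e4 : F4 = deriv F3 := by
    rw [hF4def, hF3def, show (4 : ℕ) = 3 + 1 from rfl, iteratedDeriv_succ]
  have HF : ∀ x, HasDerivAt F (F1 x) x := fun x => (hdF x).hasDerivAt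
  have H1 : ∀ x, HasDerivAt F1 (F2 x) x := fun x => by
    rw [e2]; exact (hdF1 x).hasDerivAt
  have H2 : ∀ x, HasDerivAt F2 (F3 x) x := fun x => by
    rw [e3]; exact (hdF2 x).hasDerivAt
  have H3 : ∀ x, HasDerivAt F3 (F4 x) x := fun x => by
    rw [e4]; exact (hdF3 x).hasDerivAt
  have Epos : ∀ z : ℝ, 0 < Real.exp (-c * z ^ 2) := fun z => Real.exp_pos _
  have Ele1 : ∀ z : ℝ, Real.exp (-c * z ^ 2) ≤ 1 := fun z =>
    Real.exp_le_one_iff.2 (by nlinarith [sq_nonneg z])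
  have bF : ∀ z, ‖F z‖ ≤ C * Real.exp (-c * z ^ 2) := fun z => by
    linarith [hbound z, norm_nonneg (F1 z), norm_nonneg (F2 z), norm_nonneg (F3 z)]
  have bF1 : ∀ z, ‖F1 z‖ ≤ C * Real.exp (-c * z ^ 2) := fun z => by
    linarith [hbound z, norm_nonneg (F z), norm_nonneg (F2 z), norm_nonneg (F3 z)]
  have bF2 : ∀ z, ‖F2 z‖ ≤ C * Real.exp (-c * z ^ 2) := fun z => by
    linarith [hbound z, norm_nonneg (F z), norm_nonneg (F1 z), norm_nonneg (F3 z)]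
  have bF3 : ∀ z, ‖F3 z‖ ≤ C * Real.exp (-c * z ^ 2) := fun z => by
    linarith [hbound z, norm_nonneg (F z), norm_nonneg (F1 z), norm_nonneg (F2 z)]
  have prodb : ∀ (u v : ℝ → ℂ), (∀ z, ‖u z‖ ≤ C * Real.exp (-c * z ^ 2)) →
      (∀ z, ‖v z‖ ≤ C * Real.exp (-c * z ^ 2)) →
      ∀ z, ‖u z * v z‖ ≤ C ^ 2 * Real.exp (-c * z ^ 2) := by
    intro u v hu hv z
    rw [norm_mul]
    have h1 := hu z; have h2 := hv z
    have hE := Epos z; have hE1 := Ele1 z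
    calc ‖u z‖ * ‖v z‖
        ≤ (C * Real.exp (-c * z ^ 2)) * (C * Real.exp (-c * z ^ 2)) :=
          mul_le_mul h1 h2 (norm_nonneg _) (by positivity)
      _ ≤ C ^ 2 * Real.exp (-c * z ^ 2) := by
          nlinarith [mul_nonneg (mul_nonneg (sq_nonneg C) hE.le) (sub_nonneg.2 hE1)]
  have int_F1F : Integrable fun z : ℝ => F1 z * star (F z) :=
    gauss_int (hdF1.continuous.mul hdF.continuous.star) hc
      (prodb _ _ bF1 (fun z => by simpa using bF z))
  have int_F2F : Integrable fun z : ℝ => F2 z * star (F z) :=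
    gauss_int (hdF2.continuous.mul hdF.continuous.star) hc
      (prodb _ _ bF2 (fun z => by simpa using bF z))
  have int_F1F1 : Integrable fun z : ℝ => F1 z * star (F1 z) :=
    gauss_int (hdF1.continuous.mul hdF1.continuous.star) hc
      (prodb _ _ bF1 (fun z => by simpa using bF1 z))
  have int_F3F2 : Integrable fun z : ℝ => F3 z * star (F2 z) :=
    gauss_int (hdF3.continuous.mul hdF2.continuous.star) hc
      (prodb _ _ bF3 (fun z => by simpa using bF2 z))
  have int_F3F3 : Integrable fun z : ℝ => F3 z * star (F3 z) :=
    gauss_int (hdF3.continuous.mul hdF3.continuous.star) hc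
      (prodb _ _ bF3 (fun z => by simpa using bF3 z))
  have int_FF2 : Integrable fun z : ℝ => F z * star (F2 z) :=
    gauss_int (hdF.continuous.mul hdF2.continuous.star) hc
      (prodb _ _ bF (fun z => by simpa using bF2 z))
  have int_F4F2 : Integrable fun z : ℝ => F4 z * star (F2 z) := by
    refine gauss_int (hcF4.mul hdF2.continuous.star)
      (D := (‖γ‖ ^ 2 + 2 * ‖γ‖) * C ^ 2 + ‖γ‖ * C ^ 2 / c) hc ?_
    intro z
    have hk : F4 z = -(γ * (γ - (z : ℂ) ^ 2) * F2 z + 2 * γ * F z) := by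
      have := heq z; linear_combination this
    have n1 : ‖γ * (γ - (z : ℂ) ^ 2) * F2 z‖ = ‖γ‖ * ‖γ - (z : ℂ) ^ 2‖ * ‖F2 z‖ := by
      rw [norm_mul, norm_mul]
    have n2 : ‖2 * γ * F z‖ = 2 * ‖γ‖ * ‖F z‖ := by
      rw [norm_mul, norm_mul]; norm_num
    have t1 : ‖γ - (z : ℂ) ^ 2‖ ≤ ‖γ‖ + z ^ 2 := by
      refine (norm_sub_le _ _).trans ?_
      have : ‖((z : ℂ)) ^ 2‖ = z ^ 2 := by
        rw [norm_pow, Complex.norm_real, Real.norm_eq_abs, _root_.sq_abs]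
      rw [this]
    have h5 : ‖γ - (z : ℂ) ^ 2‖ * ‖F2 z‖ ≤ (‖γ‖ + z ^ 2) * (C * Real.exp (-c * z ^ 2)) :=
      mul_le_mul t1 (bF2 z) (norm_nonneg _) (by positivity)
    have hb4 : ‖F4 z‖ ≤ (‖γ‖ ^ 2 + ‖γ‖ * z ^ 2 + 2 * ‖γ‖) * (C * Real.exp (-c * z ^ 2)) := by
      rw [hk, norm_neg]
      refine (norm_add_le _ _).trans ?_
      rw [n1, n2]
      have h6 := mul_le_mul_of_nonneg_left h5 (norm_nonneg γ)
      have h7 := mul_le_mul_of_nonneg_left (bF z) (by positivity : (0:ℝ) ≤ 2 * ‖γ‖)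
      nlinarith [h6, h7]
    have hE := Epos z; have hE1 := Ele1 z
    have hAA : Real.exp (-c * z ^ 2) * Real.exp (-c * z ^ 2) ≤ Real.exp (-c * z ^ 2) := by
      nlinarith
    have hBB : z ^ 2 * Real.exp (-c * z ^ 2) * Real.exp (-c * z ^ 2)
        ≤ (1 / c) * Real.exp (-c * z ^ 2) :=
      mul_le_mul_of_nonneg_right (sq_mul_exp_le hc z) hE.le
    calc ‖F4 z * star (F2 z)‖ = ‖F4 z‖ * ‖F2 z‖ := by rw [norm_mul, norm_star]
      _ ≤ ((‖γ‖ ^ 2 + ‖γ‖ * z ^ 2 + 2 * ‖γ‖) * (C * Real.exp (-c * z ^ 2))) *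
            (C * Real.exp (-c * z ^ 2)) :=
          mul_le_mul hb4 (bF2 z) (norm_nonneg _) (by positivity)
      _ = (‖γ‖ ^ 2 + 2 * ‖γ‖) * C ^ 2 * (Real.exp (-c * z ^ 2) * Real.exp (-c * z ^ 2))
            + ‖γ‖ * C ^ 2 * (z ^ 2 * Real.exp (-c * z ^ 2) * Real.exp (-c * z ^ 2)) := by
          ring
      _ ≤ (‖γ‖ ^ 2 + 2 * ‖γ‖) * C ^ 2 * Real.exp (-c * z ^ 2)
            + ‖γ‖ * C ^ 2 * ((1 / c) * Real.exp (-c * z ^ 2)) :=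
          add_le_add (mul_le_mul_of_nonneg_left hAA (by positivity))
            (mul_le_mul_of_nonneg_left hBB (by positivity))
      _ = ((‖γ‖ ^ 2 + 2 * ‖γ‖) * C ^ 2 + ‖γ‖ * C ^ 2 / c) * Real.exp (-c * z ^ 2) := by
          ring
  -- real integrands
  have nsq_b : ∀ (u : ℝ → ℂ), (∀ z, ‖u z‖ ≤ C * Real.exp (-c * z ^ 2)) →
      ∀ z, ‖Complex.normSq (u z)‖ ≤ C ^ 2 * Real.exp (-c * z ^ 2) := by
    intro u hu z
    have h1 := hu z
    have hE := Epos z; have hE1 := Ele1 z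
    rw [Real.norm_eq_abs, _root_.abs_of_nonneg (normSq_nonneg _), Complex.normSq_eq_norm_sq]
    calc ‖u z‖ ^ 2 ≤ (C * Real.exp (-c * z ^ 2)) ^ 2 := by
          nlinarith [norm_nonneg (u z)]
      _ ≤ C ^ 2 * Real.exp (-c * z ^ 2) := by
          nlinarith [mul_nonneg (mul_nonneg (sq_nonneg C) hE.le) (sub_nonneg.2 hE1)]
  have int_nP : Integrable fun z : ℝ => Complex.normSq (F1 z) :=
    gauss_int (Complex.continuous_normSq.comp hdF1.continuous) hc (nsq_b _ bF1)
  have int_nA : Integrable fun z : ℝ => Complex.normSq (F2 z) :=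
    gauss_int (Complex.continuous_normSq.comp hdF2.continuous) hc (nsq_b _ bF2)
  have int_nH : Integrable fun z : ℝ => Complex.normSq (F3 z) :=
    gauss_int (Complex.continuous_normSq.comp hdF3.continuous) hc (nsq_b _ bF3)
  have int_nB : Integrable fun z : ℝ => z ^ 2 * Complex.normSq (F2 z) := by
    refine gauss_int ((continuous_pow 2).mul
      (Complex.continuous_normSq.comp hdF2.continuous)) (D := C ^ 2 / c) hc ?_
    intro z
    have hE := Epos z; have hE1 := Ele1 z
    have h1 := bF2 z
    have hq : Complex.normSq (F2 z) = ‖F2 z‖ ^ 2 := by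
      rw [Complex.normSq_eq_norm_sq]
    rw [Real.norm_eq_abs, _root_.abs_of_nonneg (mul_nonneg (sq_nonneg z) (normSq_nonneg _)), hq]
    have hsq : ‖F2 z‖ ^ 2 ≤ C ^ 2 * (Real.exp (-c * z ^ 2) * Real.exp (-c * z ^ 2)) := by
      nlinarith [norm_nonneg (F2 z)]
    calc z ^ 2 * ‖F2 z‖ ^ 2
        ≤ z ^ 2 * (C ^ 2 * (Real.exp (-c * z ^ 2) * Real.exp (-c * z ^ 2))) :=
          mul_le_mul_of_nonneg_left hsq (sq_nonneg z)
      _ = C ^ 2 * (z ^ 2 * Real.exp (-c * z ^ 2) * Real.exp (-c * z ^ 2)) := by ring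
      _ ≤ C ^ 2 * ((1 / c) * Real.exp (-c * z ^ 2)) :=
          mul_le_mul_of_nonneg_left
            (mul_le_mul_of_nonneg_right (sq_mul_exp_le hc z) hE.le) (sq_nonneg C)
      _ = C ^ 2 / c * Real.exp (-c * z ^ 2) := by ring
  -- the real integrals
  set P := ∫ z : ℝ, Complex.normSq (F1 z) with hPdef
  set A := ∫ z : ℝ, Complex.normSq (F2 z) with hAdef
  set B := ∫ z : ℝ, z ^ 2 * Complex.normSq (F2 z) with hBdef
  have conv : ∀ w : ℂ, w * star w = ((Complex.normSq w : ℝ) : ℂ) := fun w => by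
    rw [← starRingEnd_apply]; exact Complex.mul_conj w
  -- first integration by parts
  have I1 : (∫ z : ℝ, (F2 z * star (F z) + F1 z * star (F1 z))) = 0 :=
    integral_eq_zero_of_hasDerivAt_of_integrable
      (fun x => (H1 x).mul (HF x).star) (int_F2F.add int_F1F1) int_F1F
  have P0 : (∫ z : ℝ, F1 z * star (F1 z)) = ((P : ℝ) : ℂ) := by
    simp_rw [conv]
    exact integral_ofReal
  have IgF : (∫ z : ℝ, F2 z * star (F z)) = -((P : ℝ) : ℂ) := by
    have h := I1
    rw [integral_add int_F2F int_F1F1, P0] at h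
    linear_combination h
  have IFg : (∫ z : ℝ, F z * star (F2 z)) = -((P : ℝ) : ℂ) := by
    have h1 : (fun z : ℝ => F z * star (F2 z)) = fun z : ℝ => star (F2 z * star (F z)) := by
      funext z; rw [star_mul, star_star]
    rw [h1]
    have h2 : (∫ z : ℝ, star (F2 z * star (F z))) = star (∫ z : ℝ, F2 z * star (F z)) := by
      simp_rw [← starRingEnd_apply]
      exact integral_conj
    rw [h2, IgF, star_neg, ← starRingEnd_apply, Complex.conj_ofReal]
  -- second integration by parts
  have I2 : (∫ z : ℝ, (F4 z * star (F2 z) + F3 z * star (F3 z))) = 0 :=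
    integral_eq_zero_of_hasDerivAt_of_integrable
      (fun x => (H3 x).mul (H2 x).star) (int_F4F2.add int_F3F3) int_F3F2
  have point : (fun z : ℝ => F4 z * star (F2 z) + F3 z * star (F3 z)) =
      fun z : ℝ => -(γ ^ 2) * ((Complex.normSq (F2 z) : ℝ) : ℂ)
        + γ * (((z ^ 2 * Complex.normSq (F2 z) : ℝ)) : ℂ)
        + (-(2 * γ)) * (F z * star (F2 z))
        + ((Complex.normSq (F3 z) : ℝ) : ℂ) := by
    funext z
    have hk := heq z
    rw [← conv (F2 z), ← conv (F3 z)]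
    push_cast
    rw [← conv (F2 z)]
    linear_combination star (F2 z) * hk
  have int1 : Integrable fun z : ℝ => -(γ ^ 2) * ((Complex.normSq (F2 z) : ℝ) : ℂ) :=
    int_nA.ofReal.const_mul _
  have int2 : Integrable fun z : ℝ => γ * (((z ^ 2 * Complex.normSq (F2 z) : ℝ)) : ℂ) :=
    int_nB.ofReal.const_mul _
  have int3 : Integrable fun z : ℝ => (-(2 * γ)) * (F z * star (F2 z)) :=
    int_FF2.const_mul _
  have int4 : Integrable fun z : ℝ => ((Complex.normSq (F3 z) : ℝ) : ℂ) :=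
    int_nH.ofReal
  have i12 : Integrable fun z : ℝ => -(γ ^ 2) * ((Complex.normSq (F2 z) : ℝ) : ℂ)
      + γ * (((z ^ 2 * Complex.normSq (F2 z) : ℝ)) : ℂ) := int1.add int2
  have i123 : Integrable fun z : ℝ => -(γ ^ 2) * ((Complex.normSq (F2 z) : ℝ) : ℂ)
      + γ * (((z ^ 2 * Complex.normSq (F2 z) : ℝ)) : ℂ)
      + (-(2 * γ)) * (F z * star (F2 z)) := i12.add int3
  have key : -(γ ^ 2) * ((A : ℝ) : ℂ) + γ * ((B : ℝ) : ℂ) + (-(2 * γ)) * (-((P : ℝ) : ℂ))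
      + ((∫ z : ℝ, Complex.normSq (F3 z) : ℝ) : ℂ) = 0 := by
    have h := I2
    rw [point, integral_add i123 int4,
      integral_add i12 int3, integral_add int1 int2,
      integral_const_mul, integral_const_mul, integral_const_mul,
      show (∫ z : ℝ, ((Complex.normSq (F2 z) : ℝ) : ℂ)) = ((A : ℝ) : ℂ) from integral_ofReal,
      show (∫ z : ℝ, ((z ^ 2 * Complex.normSq (F2 z) : ℝ) : ℂ)) = ((B : ℝ) : ℂ) from
        integral_ofReal,
      show (∫ z : ℝ, ((Complex.normSq (F3 z) : ℝ) : ℂ))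
          = ((∫ z : ℝ, Complex.normSq (F3 z) : ℝ) : ℂ) from integral_ofReal,
      IFg] at h
    exact h
  -- take imaginary parts
  have him := congrArg Complex.im key
  simp only [Complex.add_im, Complex.mul_im, Complex.neg_im, Complex.neg_re,
    Complex.ofReal_im, Complex.ofReal_re, Complex.zero_im, mul_zero, zero_mul,
    Complex.re_ofNat, Complex.im_ofNat, add_zero, zero_add, neg_neg, neg_zero] at him
  have hA0 : 0 ≤ A := integral_nonneg fun z => normSq_nonneg _
  have hB0 : 0 ≤ B := integral_nonneg fun z => mul_nonneg (sq_nonneg z) (normSq_nonneg _)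
  have hP0 : 0 ≤ P := integral_nonneg fun z => normSq_nonneg _
  have hPz : P = 0 := by
    have h1 : 0 ≤ (γ ^ 2).im * A := mul_nonneg hγ2 hA0
    have h2 : γ.im * B ≤ 0 := mul_nonpos_of_nonpos_of_nonneg hγ.le hB0
    have h3 : γ.im * P ≤ 0 := mul_nonpos_of_nonpos_of_nonneg hγ.le hP0
    nlinarith [him, h1, h2, h3, hγ, hP0]
  -- deduce F1 = 0
  have hae : (fun z : ℝ => Complex.normSq (F1 z)) =ᵐ[volume] 0 :=
    (integral_eq_zero_iff_of_nonneg (fun z => normSq_nonneg _) int_nP).1 hPz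
  have hcont : Continuous fun z : ℝ => Complex.normSq (F1 z) :=
    Complex.continuous_normSq.comp hdF1.continuous
  have hfun : (fun z : ℝ => Complex.normSq (F1 z)) = 0 :=
    (hcont.ae_eq_iff_eq volume continuous_const).1 hae
  have hF1z : ∀ z : ℝ, F1 z = 0 := fun z =>
    Complex.normSq_eq_zero.1 (congrFun hfun z)
  -- F is constant, with limit 0
  have hconst : ∀ x y : ℝ, F x = F y := fun x y =>
    is_const_of_deriv_eq_zero hdF (fun z => hF1z z) x y
  have hlim : Tendsto (fun x : ℝ => C * Real.exp (-c * x ^ 2)) atTop (𝓝 0) := by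
    have h1 : Tendsto (fun x : ℝ => c * x ^ 2) atTop atTop :=
      (tendsto_pow_atTop (two_ne_zero)).const_mul_atTop hc
    have h2 : Tendsto (fun x : ℝ => Real.exp (-(c * x ^ 2))) atTop (𝓝 0) :=
      Real.tendsto_exp_neg_atTop_nhds_zero.comp h1
    have h3 : Tendsto (fun x : ℝ => C * Real.exp (-(c * x ^ 2))) atTop (𝓝 (C * 0)) :=
      h2.const_mul C
    simpa [neg_mul] using h3
  intro z
  have hFz : Tendsto (fun x : ℝ => F x) atTop (𝓝 0) :=
    squeeze_zero_norm (fun x => bF x) hlim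
  have hconstlim : Tendsto (fun x : ℝ => F x) atTop (𝓝 (F z)) := by
    have hcf : (fun x : ℝ => F x) = fun _ => F z := funext fun x => hconst x z
    rw [hcf]; exact tendsto_const_nhds
  exact tendsto_nhds_unique hconstlim hFz
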